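/- Let T > 0, let y : (0,T] → ℝ be a bounded C¹ function, and let s ∈ [1,2). Let (aₙ)ₙ≥₁ be a strictly decreasing sequence in (0,T] with aₙ → 0, y(aₙ) = 0 for all n, and y(x) ≠ 0 for all x ∈ (a_{n+1}, aₙ) and all n (consecutive zeros). Suppose there exist constants c₁, c₂, ε₀ > 0 and a function k : (0,ε₀) → ℕ such that for all ε ∈ (0,ε₀): aₙ − a_{n+1} ≤ ε for every n ≥ k(ε); c₁·ε^{2−s} ≤ Σ_{n ≥ k(ε)} (max_{x∈[a_{n+1},aₙ]} |y(x)|)·(aₙ − a_{n+1}); and a_{k(ε)}·sup_{x∈(0,a_{k(ε)}]} |y(x)| + ε·∫_{a_{k(ε)}}^{a₁} |y′(x)| dx ≤ c₂·ε^{2−s}. Then the graph G(y) satisfies dim_B G(y) = s and 0 < M_*^{s}(G(y)) ≤ M^{*s}(G(y)) < ∞, i.e. y is s-dimensional fractal oscillatory near x = 0. -/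

import Mathlib

open Set Filter MeasureTheory Real

noncomputable section

/-- The Euclidean ε-neighborhood `A_ε = {y : dist(y, A) < ε}` of a set `A ⊆ ℝ²`
(with the Euclidean distance). -/
def euclNbhd (A : Set (ℝ × ℝ)) (ε : ℝ) : Set (ℝ × ℝ) :=
  {y | ∃ a ∈ A, Real.sqrt ((y.1 - a.1) ^ 2 + (y.2 - a.2) ^ 2) < ε}

/-- Lower `s`-dimensional Minkowski content of a set `A ⊆ ℝ²`:
`liminf_{ε→0⁺} vol₂(A_ε) / ε^{2-s}`. -/
def lowerMinkowskiContent (A : Set (ℝ × ℝ)) (s : ℝ) : ENNReal :=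
  Filter.liminf
    (fun ε : ℝ => MeasureTheory.volume (euclNbhd A ε) / ENNReal.ofReal (ε ^ (2 - s)))
    (nhdsWithin 0 (Set.Ioi 0))

/-- Upper `s`-dimensional Minkowski content of a set `A ⊆ ℝ²`:
`limsup_{ε→0⁺} vol₂(A_ε) / ε^{2-s}`. -/
def upperMinkowskiContent (A : Set (ℝ × ℝ)) (s : ℝ) : ENNReal :=
  Filter.limsup
    (fun ε : ℝ => MeasureTheory.volume (euclNbhd A ε) / ENNReal.ofReal (ε ^ (2 - s)))
    (nhdsWithin 0 (Set.Ioi 0))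

/-- Lower box dimension: `inf {s ≥ 0 : M_*^s(A) = 0}`. -/
def lowerBoxDim (A : Set (ℝ × ℝ)) : ℝ :=
  sInf {s : ℝ | 0 ≤ s ∧ lowerMinkowskiContent A s = 0}

/-- Upper box dimension: `inf {s ≥ 0 : M^{*s}(A) = 0}`. -/
def upperBoxDim (A : Set (ℝ × ℝ)) : ℝ :=
  sInf {s : ℝ | 0 ≤ s ∧ upperMinkowskiContent A s = 0}

end

lemma euclNbhd_mono {A B : Set (ℝ × ℝ)} (h : A ⊆ B) (ε : ℝ) :
    euclNbhd A ε ⊆ euclNbhd B ε := fun p ⟨a, ha, hd⟩ => ⟨a, h ha, hd⟩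

lemma euclNbhd_union (A B : Set (ℝ × ℝ)) (ε : ℝ) :
    euclNbhd (A ∪ B) ε = euclNbhd A ε ∪ euclNbhd B ε := by
  ext p
  constructor
  · rintro ⟨a, ha | ha, hd⟩
    · exact Or.inl ⟨a, ha, hd⟩
    · exact Or.inr ⟨a, ha, hd⟩
  · rintro (⟨a, ha, hd⟩ | ⟨a, ha, hd⟩)
    · exact ⟨a, Or.inl ha, hd⟩
    · exact ⟨a, Or.inr ha, hd⟩

lemma abs_lt_of_sqrt {u v ε : ℝ} (h : Real.sqrt (u ^ 2 + v ^ 2) < ε) :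
    |u| < ε ∧ |v| < ε := by
  have h1 : |u| ≤ Real.sqrt (u ^ 2 + v ^ 2) := by
    rw [← Real.sqrt_sq_eq_abs]
    exact Real.sqrt_le_sqrt (by nlinarith [sq_nonneg v])
  have h2 : |v| ≤ Real.sqrt (u ^ 2 + v ^ 2) := by
    rw [← Real.sqrt_sq_eq_abs]
    exact Real.sqrt_le_sqrt (by nlinarith [sq_nonneg u])
  exact ⟨lt_of_le_of_lt h1 h, lt_of_le_of_lt h2 h⟩

lemma euclNbhd_subset_box {A : Set (ℝ × ℝ)} {α β γ δ ε : ℝ}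
    (h : ∀ p ∈ A, p.1 ∈ Icc α β ∧ p.2 ∈ Icc γ δ) :
    euclNbhd A ε ⊆ (Ioo (α - ε) (β + ε)) ×ˢ (Ioo (γ - ε) (δ + ε)) := by
  rintro p ⟨q, hq, hd⟩
  obtain ⟨h1, h2⟩ := abs_lt_of_sqrt hd
  obtain ⟨hx, hy⟩ := h q hq
  rw [abs_lt] at h1 h2
  refine ⟨⟨?_, ?_⟩, ?_, ?_⟩ <;> simp only [mem_Icc] at hx hy <;> [skip; skip; skip; skip] <;> linarith [h1.1, h1.2, h2.1, h2.2, hx.1, hx.2, hy.1, hy.2]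

lemma volume_Ioo_prod (a b c d : ℝ) :
    volume ((Ioo a b) ×ˢ (Ioo c d)) = ENNReal.ofReal (b - a) * ENNReal.ofReal (d - c) := by
  rw [show (volume : Measure (ℝ × ℝ)) = (volume : Measure ℝ).prod volume from rfl,
    Measure.prod_prod, Real.volume_Ioo, Real.volume_Ioo]

lemma key_ftc {T : ℝ} {y : ℝ → ℝ} (hy : ContDiffOn ℝ 1 y (Ioc 0 T))
    {u v : ℝ} (hu : 0 < u) (huv : u ≤ v) (hv : v ≤ T) :
    |y v - y u| ≤ ∫ x in u..v, |derivWithin y (Ioc 0 T) x| := by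
  set y' := derivWithin y (Ioc 0 T) with hy'
  have hIcc : Icc u v ⊆ Ioc 0 T := fun x hx => ⟨lt_of_lt_of_le hu hx.1, le_trans hx.2 hv⟩
  have hT : (0:ℝ) < T := lt_of_lt_of_le hu (le_trans huv hv)
  have hcont : ContinuousOn y (Icc u v) := hy.continuousOn.mono hIcc
  have hderiv : ∀ x ∈ Ioo u v, HasDerivWithinAt y (y' x) (Ioi x) x := by
    intro x hx
    have hxm : Ioc 0 T ∈ nhds x := by
      refine mem_nhds_iff.2 ⟨Ioo 0 T, Ioo_subset_Ioc_self, isOpen_Ioo, ⟨lt_of_lt_of_le hu hx.1.le, lt_of_lt_of_le hx.2 hv⟩⟩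
    have hdiff : DifferentiableAt ℝ y x :=
      ((hy.differentiableOn one_ne_zero) x (hIcc ⟨hx.1.le, hx.2.le⟩)).differentiableAt hxm
    have : y' x = deriv y x := derivWithin_of_mem_nhds hxm
    rw [this]
    exact hdiff.hasDerivAt.hasDerivWithinAt
  have hcy' : ContinuousOn y' (Icc u v) :=
    (hy.continuousOn_derivWithin (uniqueDiffOn_Ioc 0 T) le_rfl).mono hIcc
  have hint : IntervalIntegrable y' volume u v := by
    apply ContinuousOn.intervalIntegrable
    rwa [uIcc_of_le huv]
  have heq : ∫ x in u..v, y' x = y v - y u :=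
    intervalIntegral.integral_eq_sub_of_hasDeriv_right_of_le huv hcont hderiv hint
  calc |y v - y u| = |∫ x in u..v, y' x| := by rw [heq]
    _ ≤ ∫ x in u..v, |y' x| := intervalIntegral.abs_integral_le_integral_abs huv

lemma nbhd_graph_le (f : ℝ → ℝ) {α β : ℝ} (hab : α ≤ β) (hf : ContinuousOn f (Icc α β))
    (V : ℝ → ℝ) (hV : ∀ u v, α ≤ u → u ≤ v → v ≤ β → |f v - f u| ≤ V v - V u)
    {ε : ℝ} (hε : 0 < ε) :
    volume (euclNbhd {p : ℝ × ℝ | ∃ z ∈ Icc α β, p = (z, f z)} ε) ≤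
      ENNReal.ofReal (3*ε*(V β - V α) + 6*ε*(β - α) + 6*ε^2) := by
  have hVmono : ∀ u v, α ≤ u → u ≤ v → v ≤ β → V u ≤ V v := by
    intro u v h1 h2 h3
    have := hV u v h1 h2 h3
    have := abs_nonneg (f v - f u)
    linarith
  set d := β - α with hd
  have hd0 : 0 ≤ d := by linarith
  set N : ℕ := ⌊d/ε⌋₊ + 1 with hN
  have hN0 : 0 < N := Nat.succ_pos _
  have hNR : (0:ℝ) < N := Nat.cast_pos.2 hN0
  set w : ℝ := d / N with hw
  have hw0 : 0 ≤ w := div_nonneg hd0 hNR.le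
  have hwε : w ≤ ε := by
    rw [hw, div_le_iff₀ hNR]
    have h1 : d / ε < N := by
      rw [hN]; push_cast; exact Nat.lt_floor_add_one _
    calc d = (d / ε) * ε := by field_simp
      _ ≤ N * ε := by nlinarith
      _ = ε * N := by ring
  set x : ℕ → ℝ := fun i => α + i * w with hx
  have hx0 : x 0 = α := by simp [hx]
  have hxN : x N = β := by
    rw [hx]; simp only
    rw [hw, mul_div_cancel₀ _ (ne_of_gt hNR)]
    linarith
  have hxmono : ∀ i j : ℕ, i ≤ j → x i ≤ x j := by
    intro i j hij
    simp only [hx]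
    have : (i:ℝ) ≤ j := Nat.cast_le.2 hij
    nlinarith
  have hxα : ∀ i, α ≤ x i := fun i => by rw [← hx0]; exact hxmono 0 i (Nat.zero_le _)
  have hxβ : ∀ i, i ≤ N → x i ≤ β := fun i hi => by rw [← hxN]; exact hxmono i N hi
  have hstep : ∀ i : ℕ, x (i+1) - x i = w := by
    intro i; simp only [hx]; push_cast; ring
  -- cover
  have hcover : Icc α β ⊆ ⋃ i ∈ Finset.range N, Icc (x i) (x (i+1)) := by
    intro z hz
    simp only [Finset.mem_range, mem_iUnion, exists_prop]
    rcases eq_or_lt_of_le hw0 with hweq | hwpos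
    · -- w = 0, so d = 0 and z = α
      have hdz : d = 0 := by
        have : d = N * w := by rw [hw]; field_simp
        rw [this, ← hweq]; ring
      have hzα : z = α := le_antisymm (by rw [hd] at hdz; linarith [hz.2]) hz.1
      refine ⟨0, hN0, ?_⟩
      rw [hzα]
      constructor
      · rw [hx0]
      · rw [← hx0]; exact hxmono 0 1 (by norm_num)
    · set j := ⌊(z - α)/w⌋₊ with hj
      by_cases hjN : j < N
      · refine ⟨j, hjN, ?_, ?_⟩
        · have h1 : (j:ℝ) ≤ (z - α)/w := Nat.floor_le (div_nonneg (by linarith [hz.1]) hw0)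
          have : (j:ℝ) * w ≤ z - α := (le_div_iff₀ hwpos).1 h1
          simp only [hx]; linarith
        · have h2 : (z - α)/w < j + 1 := Nat.lt_floor_add_one _
          have : z - α < ((j:ℝ) + 1) * w := by
            calc z - α = ((z-α)/w) * w := by field_simp
              _ < ((j:ℝ)+1) * w := by nlinarith
          simp only [hx]; push_cast; linarith
      · push_neg at hjN
        have hNj : (N:ℝ) ≤ (z - α)/w := by
          rw [hj] at hjN
          exact (Nat.le_floor_iff (div_nonneg (by linarith [hz.1]) hw0)).1 hjN
        have hzβ : β ≤ z := by
          have : (N:ℝ) * w ≤ z - α := by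
            rw [le_div_iff₀ hwpos] at hNj; linarith
          have hdw : (N:ℝ) * w = d := by rw [hw]; field_simp
          rw [hdw] at this; rw [hd] at this; linarith
        have hzeq : z = β := le_antisymm hz.2 hzβ
        refine ⟨N - 1, Nat.sub_lt hN0 one_pos, ?_, ?_⟩
        · rw [hzeq, ← hxN]
          exact hxmono _ _ (Nat.sub_le _ _)
        · have hNN : N - 1 + 1 = N := Nat.succ_pred_eq_of_pos hN0
          rw [hzeq, hNN, hxN]
  -- pieces
  set P : ℕ → Set (ℝ × ℝ) := fun i => {p : ℝ × ℝ | ∃ z ∈ Icc (x i) (x (i+1)), p = (z, f z)} with hP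
  have hGsub : euclNbhd {p : ℝ × ℝ | ∃ z ∈ Icc α β, p = (z, f z)} ε ⊆
      ⋃ i ∈ Finset.range N, euclNbhd (P i) ε := by
    rintro p ⟨q, hq, hdq⟩
    obtain ⟨z, hz, rfl⟩ := hq
    have := hcover hz
    simp only [Finset.mem_range, mem_iUnion, exists_prop] at this ⊢
    obtain ⟨i, hi, hzi⟩ := this
    exact ⟨i, hi, ⟨(z, f z), ⟨z, hzi, rfl⟩, hdq⟩⟩
  have hsub : ∀ i < N, Icc (x i) (x (i+1)) ⊆ Icc α β := by
    intro i hi z hz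
    exact ⟨le_trans (hxα i) hz.1, le_trans hz.2 (hxβ (i+1) hi)⟩
  -- per-piece bound
  have hpiece : ∀ i < N, volume (euclNbhd (P i) ε) ≤
      ENNReal.ofReal (3*ε) * ENNReal.ofReal ((V (x (i+1)) - V (x i)) + 2*ε) := by
    intro i hi
    have hxii : x i ≤ x (i+1) := hxmono i (i+1) (Nat.le_succ _)
    have hfc : ContinuousOn f (Icc (x i) (x (i+1))) := hf.mono (hsub i hi)
    have hcpt : IsCompact ((f '' Icc (x i) (x (i+1)))) :=
      (isCompact_Icc).image_of_continuousOn hfc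
    have hne : (Icc (x i) (x (i+1))).Nonempty := ⟨x i, le_refl _, hxii⟩
    obtain ⟨u, hu, humax'⟩ := isCompact_Icc.exists_isMaxOn hne hfc
    obtain ⟨v, hv, hvmin'⟩ := isCompact_Icc.exists_isMinOn hne hfc
    have humax : ∀ z ∈ Icc (x i) (x (i+1)), f z ≤ f u := fun z hz => humax' hz
    have hvmin : ∀ z ∈ Icc (x i) (x (i+1)), f v ≤ f z := fun z hz => hvmin' hz
    have hbox : ∀ p ∈ P i, p.1 ∈ Icc (x i) (x (i+1)) ∧ p.2 ∈ Icc (f v) (f u) := by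
      rintro p ⟨z, hz, rfl⟩
      exact ⟨hz, hvmin z hz, humax z hz⟩
    have hvol := measure_mono (μ := (volume : Measure (ℝ × ℝ))) (euclNbhd_subset_box (ε := ε) hbox)
    rw [volume_Ioo_prod] at hvol
    refine le_trans hvol ?_
    have hosc : f u - f v ≤ V (x (i+1)) - V (x i) := by
      have hαu : α ≤ u := le_trans (hxα i) hu.1
      have hαv : α ≤ v := le_trans (hxα i) hv.1
      have huβ : u ≤ β := le_trans hu.2 (hxβ (i+1) hi)
      have hvβ : v ≤ β := le_trans hv.2 (hxβ (i+1) hi)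
      rcases le_total v u with hvu | huv
      · have := hV v u hαv hvu huβ
        have h1 : V (x i) ≤ V v := hVmono _ _ (hxα i) hv.1 hvβ
        have h2 : V u ≤ V (x (i+1)) := hVmono _ _ hαu hu.2 (hxβ (i+1) hi)
        have := abs_nonneg (f u - f v)
        calc f u - f v ≤ |f u - f v| := le_abs_self _
          _ ≤ V u - V v := hV v u hαv hvu huβ
          _ ≤ V (x (i+1)) - V (x i) := by linarith
      · calc f u - f v ≤ |f v - f u| := by rw [abs_sub_comm]; exact le_abs_self _
          _ ≤ V v - V u := hV u v hαu huv hvβ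
          _ ≤ V (x (i+1)) - V (x i) := by
            have h1 : V (x i) ≤ V u := hVmono _ _ (hxα i) hu.1 huβ
            have h2 : V v ≤ V (x (i+1)) := hVmono _ _ hαv hv.2 (hxβ (i+1) hi)
            linarith
    have e1 : x (i+1) + ε - (x i - ε) = w + 2*ε := by
      have := hstep i; linarith
    have e2 : f u + ε - (f v - ε) = (f u - f v) + 2*ε := by ring
    rw [e1, e2]
    refine mul_le_mul' (ENNReal.ofReal_le_ofReal (by linarith)) (ENNReal.ofReal_le_ofReal (by linarith))
  -- sum up
  calc volume (euclNbhd {p : ℝ × ℝ | ∃ z ∈ Icc α β, p = (z, f z)} ε)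
      ≤ volume (⋃ i ∈ Finset.range N, euclNbhd (P i) ε) := measure_mono hGsub
    _ ≤ ∑ i ∈ Finset.range N, volume (euclNbhd (P i) ε) := measure_biUnion_finset_le _ _
    _ ≤ ∑ i ∈ Finset.range N, ENNReal.ofReal (3*ε) * ENNReal.ofReal ((V (x (i+1)) - V (x i)) + 2*ε) := by
        refine Finset.sum_le_sum fun i hi => hpiece i (Finset.mem_range.1 hi)
    _ = ENNReal.ofReal (3*ε) * ∑ i ∈ Finset.range N, ENNReal.ofReal ((V (x (i+1)) - V (x i)) + 2*ε) := by
        rw [Finset.mul_sum]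
    _ ≤ ENNReal.ofReal (3*ε) * ENNReal.ofReal ((V β - V α) + 2*ε*N) := by
        refine mul_le_mul_right ?_ _
        rw [← ENNReal.ofReal_sum_of_nonneg]
        · refine ENNReal.ofReal_le_ofReal ?_
          have hsum : ∑ i ∈ Finset.range N, ((V (x (i+1)) - V (x i)) + 2*ε)
              = (V (x N) - V (x 0)) + 2*ε*N := by
            rw [Finset.sum_add_distrib, Finset.sum_range_sub (fun i => V (x i))]
            simp [Finset.sum_const, mul_comm]
          rw [hsum, hx0, hxN]
        · intro i hi
          have hxii : x i ≤ x (i+1) := hxmono i (i+1) (Nat.le_succ _)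
          have := hVmono (x i) (x (i+1)) (hxα i) hxii (hxβ (i+1) (Finset.mem_range.1 hi))
          linarith
    _ ≤ ENNReal.ofReal (3*ε*(V β - V α) + 6*ε*(β - α) + 6*ε^2) := by
        rw [← ENNReal.ofReal_mul (by linarith)]
        refine ENNReal.ofReal_le_ofReal ?_
        have hεN : ε * N ≤ d + ε := by
          have h1 : (⌊d/ε⌋₊ : ℝ) ≤ d/ε := Nat.floor_le (div_nonneg hd0 hε.le)
          have : (N:ℝ) ≤ d/ε + 1 := by rw [hN]; push_cast; linarith
          calc ε * N ≤ ε * (d/ε + 1) := by nlinarith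
            _ = d + ε := by field_simp
        have hVβα : 0 ≤ V β - V α := by
          have := hVmono α β le_rfl hab le_rfl; linarith
        calc 3*ε*((V β - V α) + 2*ε*N) = 3*ε*(V β - V α) + 6*ε*(ε*N) := by ring
          _ ≤ 3*ε*(V β - V α) + 6*ε*(d + ε) := by nlinarith
          _ = 3*ε*(V β - V α) + 6*ε*(β - α) + 6*ε^2 := by rw [hd]; ring

lemma key_lower (T s : ℝ) (hT : 0 < T)
    (y : ℝ → ℝ)
    (hy_smooth : ContDiffOn ℝ 1 y (Set.Ioc 0 T))
    (B : ℝ) (hB : ∀ x ∈ Set.Ioc 0 T, |y x| ≤ B)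
    (a : ℕ → ℝ)
    (ha_mem : ∀ n, a n ∈ Set.Ioc 0 T)
    (ha_anti : StrictAnti a)
    (ha_zero : ∀ n, y (a n) = 0)
    (c₁ ε₀ : ℝ) (hc₁ : 0 < c₁) (hε₀ : 0 < ε₀)
    (k : ℝ → ℕ)
    (hk : ∀ ε ∈ Set.Ioo 0 ε₀, ∀ n ≥ k ε, a n - a (n + 1) ≤ ε)
    (hleft : ∀ ε ∈ Set.Ioo 0 ε₀,
      c₁ * ε ^ (2 - s) ≤ ∑' n : ℕ,
        sSup ((fun x => |y x|) '' Set.Icc (a (n + k ε + 1)) (a (n + k ε))) *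
          (a (n + k ε) - a (n + k ε + 1)))
    (G : Set (ℝ × ℝ)) (hG : G = {P : ℝ × ℝ | ∃ x ∈ Set.Ioc 0 T, P = (x, y x)}) :
    ∀ ε ∈ Set.Ioo (0:ℝ) ε₀,
      ENNReal.ofReal (c₁ * ε ^ (2 - s)) ≤ volume (euclNbhd G ε) := by
  intro ε hεmem
  obtain ⟨hε1, hε2⟩ := hεmem
  have hl := hleft ε ⟨hε1, hε2⟩
  have hgap := hk ε ⟨hε1, hε2⟩
  set K := k ε with hK
  set L : ℕ → ℝ := fun n => a (n + K + 1) with hL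
  set R : ℕ → ℝ := fun n => a (n + K) with hR
  have hl' : c₁ * ε ^ (2 - s) ≤
      ∑' n : ℕ, sSup ((fun x => |y x|) '' Set.Icc (L n) (R n)) * (R n - L n) := by
    simp only [hL, hR]; exact hl
  have hLRlt : ∀ n, L n < R n := by
    intro n; simp only [hL, hR]; exact ha_anti (Nat.lt_succ_self (n + K))
  have hLpos : ∀ n, 0 < L n := fun n => (ha_mem _).1
  have hRT : ∀ n, R n ≤ T := fun n => (ha_mem _).2
  have hsubIoc : ∀ n, Icc (L n) (R n) ⊆ Ioc 0 T := fun n x hx =>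
    ⟨lt_of_lt_of_le (hLpos n) hx.1, le_trans hx.2 (hRT n)⟩
  have hRL_le : ∀ n, R n - L n ≤ ε := by
    intro n; simp only [hL, hR]; exact hgap (n + K) (Nat.le_add_left K n)
  have hycont : ∀ n, ContinuousOn y (Icc (L n) (R n)) := fun n =>
    hy_smooth.continuousOn.mono (hsubIoc n)
  have hyc : ∀ n, ContinuousOn (fun x => |y x|) (Icc (L n) (R n)) := fun n => (hycont n).abs
  have hne : ∀ n, (Icc (L n) (R n)).Nonempty := fun n => ⟨L n, le_refl _, (hLRlt n).le⟩
  choose ξ hξmem hξmax using fun n => isCompact_Icc.exists_isMaxOn (hne n) (hyc n)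
  have hmeq : ∀ n, sSup ((fun x => |y x|) '' Set.Icc (L n) (R n)) = |y (ξ n)| := by
    intro n
    refine IsGreatest.csSup_eq ⟨⟨ξ n, hξmem n, rfl⟩, ?_⟩
    rintro _ ⟨z, hz, rfl⟩
    exact hξmax n hz
  simp only [hmeq] at hl'
  set m : ℕ → ℝ := fun n => |y (ξ n)| with hm
  have hm0 : ∀ n, 0 ≤ m n := fun n => abs_nonneg _
  have hmB : ∀ n, m n ≤ B := fun n => hB (ξ n) (hsubIoc n (hξmem n))
  have hyL : ∀ n, y (L n) = 0 := by
    intro n; simp only [hL]; exact ha_zero (n + K + 1)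
  set J : ℕ → Set ℝ := fun n => if 0 ≤ y (ξ n) then Ioo 0 (m n) else Ioo (-(m n)) 0 with hJ
  set SS : ℕ → Set (ℝ × ℝ) := fun n => (Ioo (L n) (R n)) ×ˢ J n with hSS
  -- containment
  have hsub : ∀ n, SS n ⊆ euclNbhd G ε := by
    intro n p hp
    rw [hSS] at hp
    obtain ⟨hp1, hp2⟩ := hp
    -- find a point x with y x = p.2
    have hxex : ∃ x ∈ Icc (L n) (R n), y x = p.2 := by
      by_cases hsgn : 0 ≤ y (ξ n)
      · rw [hJ] at hp2; simp only [if_pos hsgn] at hp2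
        have hmξ : y (ξ n) = m n := by rw [hm]; simp only; rw [abs_of_nonneg hsgn]
        have hcont' : ContinuousOn y (Icc (L n) (ξ n)) :=
          (hycont n).mono (Icc_subset_Icc le_rfl (hξmem n).2)
        have hIVT := intermediate_value_Icc (hξmem n).1 hcont'
        have ht : p.2 ∈ Icc (y (L n)) (y (ξ n)) := by
          rw [hyL n, hmξ]; exact ⟨hp2.1.le, hp2.2.le⟩
        obtain ⟨x, hx, hyx⟩ := hIVT ht
        exact ⟨x, ⟨hx.1, le_trans hx.2 (hξmem n).2⟩, hyx⟩
      · rw [hJ] at hp2; simp only [if_neg hsgn] at hp2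
        push_neg at hsgn
        have hmξ : y (ξ n) = -(m n) := by
          rw [hm]; simp only; rw [abs_of_neg hsgn]; ring
        have hcont' : ContinuousOn y (Icc (L n) (ξ n)) :=
          (hycont n).mono (Icc_subset_Icc le_rfl (hξmem n).2)
        have hIVT := intermediate_value_Icc' (hξmem n).1 hcont'
        have ht : p.2 ∈ Icc (y (ξ n)) (y (L n)) := by
          rw [hyL n, hmξ]; exact ⟨hp2.1.le, hp2.2.le⟩
        obtain ⟨x, hx, hyx⟩ := hIVT ht
        exact ⟨x, ⟨hx.1, le_trans hx.2 (hξmem n).2⟩, hyx⟩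
    obtain ⟨x, hx, hyx⟩ := hxex
    refine ⟨(x, y x), ?_, ?_⟩
    · rw [hG]; exact ⟨x, hsubIoc n hx, rfl⟩
    · have h2 : (p.2 - (x, y x).2) = 0 := by simp [hyx]
      have h1 : |p.1 - x| < ε := by
        rw [abs_lt]
        constructor
        · have := hRL_le n; have := hx.2; have := hp1.1; linarith
        · have := hRL_le n; have := hx.1; have := hp1.2; linarith
      calc Real.sqrt ((p.1 - (x, y x).1) ^ 2 + (p.2 - (x, y x).2) ^ 2)
          = Real.sqrt ((p.1 - x) ^ 2) := by rw [h2]; norm_num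
        _ = |p.1 - x| := Real.sqrt_sq_eq_abs _
        _ < ε := h1
  -- disjointness
  have hdisj_aux : ∀ i j : ℕ, i < j → Disjoint (SS i) (SS j) := by
    intro i j hij
    rw [Set.disjoint_left]
    rintro p hpi hpj
    rw [hSS] at hpi hpj
    have h1 : p.1 ∈ Ioo (L i) (R i) := hpi.1
    have h2 : p.1 ∈ Ioo (L j) (R j) := hpj.1
    have hle : R j ≤ L i := by
      simp only [hL, hR]
      exact ha_anti.antitone (show i + K + 1 ≤ j + K by omega)
    have := h1.1; have := h2.2
    simp only [mem_Ioo] at h1 h2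
    linarith [h1.1, h2.2]
  have hdisj : Pairwise (Function.onFun Disjoint SS) := by
    intro i j hij
    rcases hij.lt_or_gt with h | h
    · exact hdisj_aux i j h
    · exact (hdisj_aux j i h).symm
  -- measurability
  have hJmeas : ∀ n, MeasurableSet (J n) := by
    intro n
    rw [hJ]
    by_cases h : 0 ≤ y (ξ n)
    · simp only [if_pos h]; exact measurableSet_Ioo
    · simp only [if_neg h]; exact measurableSet_Ioo
  have hmeas : ∀ n, MeasurableSet (SS n) := fun n => by
    rw [hSS]; exact measurableSet_Ioo.prod (hJmeas n)
  -- volumes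
  have hvolS : ∀ n, volume (SS n) = ENNReal.ofReal (m n * (R n - L n)) := by
    intro n
    rw [hSS]
    simp only
    rw [show (volume : Measure (ℝ × ℝ)) = (volume : Measure ℝ).prod volume from rfl,
      Measure.prod_prod, Real.volume_Ioo]
    have hJvol : volume (J n) = ENNReal.ofReal (m n) := by
      rw [hJ]
      by_cases h : 0 ≤ y (ξ n)
      · simp only [if_pos h, Real.volume_Ioo, sub_zero]
      · simp only [if_neg h, Real.volume_Ioo, sub_neg_eq_add, zero_add]
    rw [hJvol, ← ENNReal.ofReal_mul (by linarith [hLRlt n]), mul_comm]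
  -- summability
  have hwnn : ∀ n, 0 ≤ R n - L n := fun n => by linarith [hLRlt n]
  have hwsum : Summable (fun n => R n - L n) := by
    apply summable_of_sum_range_le hwnn
    intro N
    have hRLa : ∀ i : ℕ, R i - L i = a (i + K) - a ((i + 1) + K) := by
      intro i
      simp only [hL, hR]
      have : i + K + 1 = (i + 1) + K := by omega
      rw [this]
    calc ∑ i ∈ Finset.range N, (R i - L i)
        = ∑ i ∈ Finset.range N, ((fun j => a (j + K)) i - (fun j => a (j + K)) (i+1)) := by
          refine Finset.sum_congr rfl fun i _ => ?_
          simp only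
          exact hRLa i
      _ = a (0 + K) - a (N + K) := Finset.sum_range_sub' (fun j => a (j + K)) N
      _ ≤ a K := by
          have h1 : (0:ℕ) + K = K := by omega
          rw [h1]
          linarith [(ha_mem (N + K)).1]
  have hsum : Summable (fun n => m n * (R n - L n)) := by
    refine Summable.of_nonneg_of_le (fun n => mul_nonneg (hm0 n) (hwnn n)) (fun n => ?_)
      (hwsum.mul_left B)
    exact mul_le_mul_of_nonneg_right (hmB n) (hwnn n)
  -- final chain
  calc ENNReal.ofReal (c₁ * ε ^ (2 - s))
      ≤ ENNReal.ofReal (∑' n, m n * (R n - L n)) := ENNReal.ofReal_le_ofReal hl'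
    _ = ∑' n, ENNReal.ofReal (m n * (R n - L n)) :=
        ENNReal.ofReal_tsum_of_nonneg (fun n => mul_nonneg (hm0 n) (hwnn n)) hsum
    _ = ∑' n, volume (SS n) := tsum_congr fun n => (hvolS n).symm
    _ = volume (⋃ n, SS n) := (measure_iUnion hdisj hmeas).symm
    _ ≤ volume (euclNbhd G ε) := measure_mono (iUnion_subset hsub)

lemma key_upper (T s : ℝ) (hT : 0 < T) (hs1 : 1 ≤ s) (hs2 : s < 2)
    (y : ℝ → ℝ)
    (hy_smooth : ContDiffOn ℝ 1 y (Set.Ioc 0 T))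
    (B : ℝ) (hB : ∀ x ∈ Set.Ioc 0 T, |y x| ≤ B)
    (a : ℕ → ℝ)
    (ha_mem : ∀ n, a n ∈ Set.Ioc 0 T)
    (ha_anti : StrictAnti a)
    (ha_zero : ∀ n, y (a n) = 0)
    (c₂ ε₀ : ℝ) (hc₂ : 0 < c₂) (hε₀ : 0 < ε₀)
    (k : ℝ → ℕ)
    (hright : ∀ ε ∈ Set.Ioo 0 ε₀,
      a (k ε) * sSup ((fun x => |y x|) '' Set.Ioc 0 (a (k ε))) +
        ε * ∫ x in (a (k ε))..(a 0), |derivWithin y (Set.Ioc 0 T) x| ≤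
          c₂ * ε ^ (2 - s))
    (G : Set (ℝ × ℝ)) (hG : G = {P : ℝ × ℝ | ∃ x ∈ Set.Ioc 0 T, P = (x, y x)}) :
    ∀ ε ∈ Set.Ioo (0:ℝ) (min ε₀ 1), volume (euclNbhd G ε) ≤
      ENNReal.ofReal ((5*c₂ + 8*T + 4*B + 3*(∫ x in (a 0)..T, |derivWithin y (Set.Ioc 0 T) x|) + 10)
        * ε ^ (2 - s)) := by
  intro ε hε
  obtain ⟨hε1, hεm⟩ := hε
  have hε2 : ε < ε₀ := lt_of_lt_of_le hεm (min_le_left _ _)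
  have hε3 : ε ≤ 1 := le_of_lt (lt_of_lt_of_le hεm (min_le_right _ _))
  set y' : ℝ → ℝ := fun x => derivWithin y (Set.Ioc 0 T) x with hy'
  set K := k ε with hK
  set aK := a K with haK
  have h0aK : 0 < aK := (ha_mem K).1
  have haKT : aK ≤ T := (ha_mem K).2
  have haK0 : aK ≤ a 0 := ha_anti.antitone (Nat.zero_le K)
  have ha0T : a 0 ≤ T := (ha_mem 0).2
  have h0a0 : 0 < a 0 := (ha_mem 0).1
  have hB0 : 0 ≤ B := le_trans (abs_nonneg _) (hB (a 0) (ha_mem 0))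
  have hy'cont : ContinuousOn (fun x => |y' x|) (Set.Ioc 0 T) :=
    (hy_smooth.continuousOn_derivWithin (uniqueDiffOn_Ioc 0 T) le_rfl).abs
  have hIcc_sub : Icc aK T ⊆ Ioc 0 T := fun x hx => ⟨lt_of_lt_of_le h0aK hx.1, hx.2⟩
  have hintgr : ∀ u v : ℝ, aK ≤ u → u ≤ v → v ≤ T →
      IntervalIntegrable (fun x => |y' x|) volume u v := by
    intro u v h1 h2 h3
    apply ContinuousOn.intervalIntegrable
    rw [uIcc_of_le h2]
    exact hy'cont.mono (fun x hx => hIcc_sub ⟨le_trans h1 hx.1, le_trans hx.2 h3⟩)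
  set I := ∫ x in aK..(a 0), |y' x| with hI
  set C₀ := ∫ x in (a 0)..T, |y' x| with hC₀
  have hIpos : 0 ≤ I := intervalIntegral.integral_nonneg haK0 (fun x _ => abs_nonneg _)
  have hC₀pos : 0 ≤ C₀ := intervalIntegral.integral_nonneg ha0T (fun x _ => abs_nonneg _)
  set S := sSup ((fun x => |y x|) '' Set.Ioc 0 aK) with hS
  have hbdd : BddAbove ((fun x => |y x|) '' Set.Ioc 0 aK) := by
    refine ⟨B, ?_⟩
    rintro _ ⟨z, hz, rfl⟩
    exact hB z ⟨hz.1, le_trans hz.2 haKT⟩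
  have hSmem : ∀ x ∈ Set.Ioc 0 aK, |y x| ≤ S := fun x hx => le_csSup hbdd ⟨x, hx, rfl⟩
  have hS0 : 0 ≤ S := by
    have h1 := hSmem aK ⟨h0aK, le_refl _⟩
    have h0 : |y aK| = 0 := by rw [haK, ha_zero K, abs_zero]
    linarith
  have hSB : S ≤ B := csSup_le ⟨|y aK|, aK, ⟨h0aK, le_refl _⟩, rfl⟩
    (by rintro _ ⟨z, hz, rfl⟩; exact hB z ⟨hz.1, le_trans hz.2 haKT⟩)
  have hr := hright ε ⟨hε1, hε2⟩
  rw [← hK, ← haK, ← hS, ← hI] at hr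
  have hεI : ε * I ≤ c₂ * ε ^ (2 - s) := by
    have : 0 ≤ aK * S := mul_nonneg h0aK.le hS0
    linarith
  have haKS : aK * S ≤ c₂ * ε ^ (2 - s) := by
    have : 0 ≤ ε * I := mul_nonneg hε1.le hIpos
    linarith
  set G₁ : Set (ℝ × ℝ) := {p : ℝ × ℝ | ∃ x ∈ Set.Ioc 0 aK, p = (x, y x)} with hG₁
  set G₂ : Set (ℝ × ℝ) := {p : ℝ × ℝ | ∃ z ∈ Set.Icc aK T, p = (z, y z)} with hG₂
  have hGsub : G ⊆ G₁ ∪ G₂ := by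
    rw [hG]
    rintro p ⟨x, hx, rfl⟩
    rcases le_total x aK with h | h
    · exact Or.inl ⟨x, ⟨hx.1, h⟩, rfl⟩
    · exact Or.inr ⟨x, ⟨h, hx.2⟩, rfl⟩
  have hvol_split : volume (euclNbhd G ε) ≤ volume (euclNbhd G₁ ε) + volume (euclNbhd G₂ ε) := by
    calc volume (euclNbhd G ε) ≤ volume (euclNbhd (G₁ ∪ G₂) ε) :=
          measure_mono (euclNbhd_mono hGsub ε)
      _ = volume (euclNbhd G₁ ε ∪ euclNbhd G₂ ε) := by rw [euclNbhd_union]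
      _ ≤ _ := measure_union_le _ _
  have hvol1 : volume (euclNbhd G₁ ε) ≤ ENNReal.ofReal ((aK + 2*ε) * (2*S + 2*ε)) := by
    have hbox : ∀ p ∈ G₁, p.1 ∈ Icc 0 aK ∧ p.2 ∈ Icc (-S) S := by
      rintro p ⟨x, hx, rfl⟩
      have := hSmem x hx
      rw [abs_le] at this
      exact ⟨⟨hx.1.le, hx.2⟩, this⟩
    have h1 := measure_mono (μ := (volume : Measure (ℝ × ℝ))) (euclNbhd_subset_box (ε := ε) hbox)
    rw [volume_Ioo_prod] at h1
    refine le_trans h1 ?_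
    rw [← ENNReal.ofReal_mul (by linarith)]
    refine ENNReal.ofReal_le_ofReal (le_of_eq ?_)
    ring
  set V : ℝ → ℝ := fun x => ∫ t in aK..x, |y' t| with hV
  have hVdiff : ∀ u v : ℝ, aK ≤ u → u ≤ v → v ≤ T → V v - V u = ∫ x in u..v, |y' x| := by
    intro u v h1 h2 h3
    have i1 : IntervalIntegrable (fun x => |y' x|) volume aK u :=
      hintgr aK u le_rfl h1 (le_trans h2 h3)
    have i2 : IntervalIntegrable (fun x => |y' x|) volume u v :=
      hintgr u v h1 h2 h3
    have hadd := intervalIntegral.integral_add_adjacent_intervals i1 i2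
    rw [hV]
    simp only
    linarith [hadd]
  have hVprop : ∀ u v, aK ≤ u → u ≤ v → v ≤ T → |y v - y u| ≤ V v - V u := by
    intro u v h1 h2 h3
    rw [hVdiff u v h1 h2 h3]
    exact key_ftc hy_smooth (lt_of_lt_of_le h0aK h1) h2 h3
  have hycont : ContinuousOn y (Icc aK T) := hy_smooth.continuousOn.mono hIcc_sub
  have hvol2 := nbhd_graph_le y haKT hycont V hVprop hε1
  have hVT : V T - V aK = I + C₀ := by
    have i1 : IntervalIntegrable (fun x => |y' x|) volume aK (a 0) := hintgr _ _ le_rfl haK0 ha0T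
    have i2 : IntervalIntegrable (fun x => |y' x|) volume (a 0) T :=
      hintgr _ _ haK0 ha0T le_rfl
    have hadd := intervalIntegral.integral_add_adjacent_intervals i1 i2
    have hVaK : V aK = 0 := intervalIntegral.integral_same
    have hVTval : V T = ∫ x in aK..T, |y' x| := rfl
    rw [hVTval, hVaK, ← hadd, hI, hC₀]
    ring
  have hfinal : (aK + 2*ε) * (2*S + 2*ε) + (3*ε*(V T - V aK) + 6*ε*(T - aK) + 6*ε^2)
      ≤ (5*c₂ + 8*T + 4*B + 3*C₀ + 10) * ε ^ (2 - s) := by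
    rw [hVT]
    set E := ε ^ (2 - s) with hE
    have hεle : ε ≤ E := by
      have h := Real.rpow_le_rpow_of_exponent_ge hε1 hε3 (show 2 - s ≤ 1 by linarith)
      rwa [Real.rpow_one] at h
    have hE0 : 0 ≤ E := le_trans hε1.le hεle
    have hε2le : ε^2 ≤ E := by
      have h1 : ε^2 = ε*ε := pow_two ε
      have h2 : ε*ε ≤ ε*1 := mul_le_mul_of_nonneg_left hε3 hε1.le
      rw [h1]; rw [mul_one] at h2; linarith
    have expand : (aK + 2*ε) * (2*S + 2*ε) = 2*(aK*S) + 2*(ε*aK) + 4*(ε*S) + 4*ε^2 := by ring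
    have ht1 : 2*(aK*S) ≤ 2*(c₂ * E) := by linarith
    have ht2 : ε*aK ≤ T*E := by
      calc ε*aK ≤ ε*T := mul_le_mul_of_nonneg_left haKT hε1.le
        _ ≤ E*T := mul_le_mul_of_nonneg_right hεle hT.le
        _ = T*E := mul_comm _ _
    have ht3 : ε*S ≤ B*E := by
      calc ε*S ≤ ε*B := mul_le_mul_of_nonneg_left hSB hε1.le
        _ ≤ E*B := mul_le_mul_of_nonneg_right hεle hB0
        _ = B*E := mul_comm _ _
    have ht4 : ε*(T - aK) ≤ T*E := by
      calc ε*(T - aK) ≤ ε*T := mul_le_mul_of_nonneg_left (by linarith) hε1.le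
        _ ≤ E*T := mul_le_mul_of_nonneg_right hεle hT.le
        _ = T*E := mul_comm _ _
    have ht5 : ε*I ≤ c₂*E := hεI
    have ht6 : ε*C₀ ≤ C₀*E := by
      calc ε*C₀ ≤ E*C₀ := mul_le_mul_of_nonneg_right hεle hC₀pos
        _ = C₀*E := mul_comm _ _
    have expand2 : 3*ε*(I + C₀) = 3*(ε*I) + 3*(ε*C₀) := by ring
    have expand3 : 6*ε*(T - aK) = 6*(ε*(T - aK)) := by ring
    have rhs : (5*c₂ + 8*T + 4*B + 3*C₀ + 10) * E
        = 2*(c₂*E) + 3*(c₂*E) + 2*(T*E) + 6*(T*E) + 4*(B*E) + 3*(C₀*E) + 10*E := by ring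
    rw [expand, expand2, expand3, rhs]
    linarith
  calc volume (euclNbhd G ε) ≤ volume (euclNbhd G₁ ε) + volume (euclNbhd G₂ ε) := hvol_split
    _ ≤ ENNReal.ofReal ((aK + 2*ε) * (2*S + 2*ε))
        + ENNReal.ofReal (3*ε*(V T - V aK) + 6*ε*(T - aK) + 6*ε^2) := add_le_add hvol1 hvol2
    _ = ENNReal.ofReal ((aK + 2*ε) * (2*S + 2*ε) + (3*ε*(V T - V aK) + 6*ε*(T - aK) + 6*ε^2)) := by
        rw [← ENNReal.ofReal_add]
        · positivity
        · rw [hVT]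
          have h1 : 0 ≤ 3*ε*(I + C₀) := by positivity
          have h2 : 0 ≤ 6*ε*(T - aK) := by
            have := sub_nonneg.2 haKT
            positivity
          positivity
    _ ≤ ENNReal.ofReal ((5*c₂ + 8*T + 4*B + 3*C₀ + 10) * ε ^ (2 - s)) :=
        ENNReal.ofReal_le_ofReal hfinal

lemma box_dim_endgame (s : ℝ) (hs : s ∈ Set.Ico (1:ℝ) 2) (G : Set (ℝ × ℝ))
    (c₁ C ε₁ : ℝ) (hc₁ : 0 < c₁) (hC : 0 < C) (hε₁ : 0 < ε₁)
    (KEY1 : ∀ ε ∈ Set.Ioo (0:ℝ) ε₁, ENNReal.ofReal (c₁ * ε ^ (2 - s)) ≤ volume (euclNbhd G ε))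
    (KEY2 : ∀ ε ∈ Set.Ioo (0:ℝ) ε₁, volume (euclNbhd G ε) ≤ ENNReal.ofReal (C * ε ^ (2 - s))) :
    lowerBoxDim G = s ∧ upperBoxDim G = s ∧
    0 < lowerMinkowskiContent G s ∧ upperMinkowskiContent G s < ⊤ := by
  obtain ⟨hs1, hs2⟩ := hs
  set l := nhdsWithin (0:ℝ) (Ioi 0) with hl
  set Φ : ℝ → ℝ → ENNReal := fun t ε => volume (euclNbhd G ε) / ENNReal.ofReal (ε ^ (2 - t)) with hΦ
  have hmemIoo : ∀ δ : ℝ, 0 < δ → ∀ᶠ ε in l, ε ∈ Ioo (0:ℝ) δ := by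
    intro δ hδ
    exact Ioo_mem_nhdsGT_of_mem ⟨le_refl 0, hδ⟩
  -- lower bound for Φ s
  have hlb : ∀ᶠ ε in l, ENNReal.ofReal c₁ ≤ Φ s ε := by
    filter_upwards [hmemIoo ε₁ hε₁] with ε hε
    have hE : (0:ℝ) < ε ^ (2 - s) := Real.rpow_pos_of_pos hε.1 _
    have h1 : ENNReal.ofReal (c₁ * ε ^ (2 - s)) / ENNReal.ofReal (ε ^ (2 - s)) ≤ Φ s ε :=
      ENNReal.div_le_div_right (KEY1 ε hε) _
    have h2 : ENNReal.ofReal (c₁ * ε ^ (2 - s)) / ENNReal.ofReal (ε ^ (2 - s))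
        = ENNReal.ofReal c₁ := by
      rw [← ENNReal.ofReal_div_of_pos hE, mul_div_assoc, div_self (ne_of_gt hE), mul_one]
    rwa [h2] at h1
  have hM_low : ENNReal.ofReal c₁ ≤ lowerMinkowskiContent G s := le_liminf_of_le (by isBoundedDefault) hlb
  have hub : ∀ᶠ ε in l, Φ s ε ≤ ENNReal.ofReal C := by
    filter_upwards [hmemIoo ε₁ hε₁] with ε hε
    have hE : (0:ℝ) < ε ^ (2 - s) := Real.rpow_pos_of_pos hε.1 _
    have h1 : Φ s ε ≤ ENNReal.ofReal (C * ε ^ (2 - s)) / ENNReal.ofReal (ε ^ (2 - s)) :=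
      ENNReal.div_le_div_right (KEY2 ε hε) _
    have h2 : ENNReal.ofReal (C * ε ^ (2 - s)) / ENNReal.ofReal (ε ^ (2 - s))
        = ENNReal.ofReal C := by
      rw [← ENNReal.ofReal_div_of_pos hE, mul_div_assoc, div_self (ne_of_gt hE), mul_one]
    rwa [h2] at h1
  have hM_up : upperMinkowskiContent G s ≤ ENNReal.ofReal C := limsup_le_of_le (by isBoundedDefault) hub
  have hlow_pos : 0 < lowerMinkowskiContent G s :=
    lt_of_lt_of_le (ENNReal.ofReal_pos.2 hc₁) hM_low
  have hup_lt : upperMinkowskiContent G s < ⊤ := lt_of_le_of_lt hM_up ENNReal.ofReal_lt_top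
  -- for s' > s : contents vanish
  have htend : ∀ s' : ℝ, s < s' → Tendsto (Φ s') l (nhds 0) := by
    intro s' hss'
    have hpos : 0 < s' - s := by linarith
    have hg : Tendsto (fun ε : ℝ => ENNReal.ofReal (C * ε ^ (s' - s))) l (nhds 0) := by
      have h0 : Tendsto (fun ε : ℝ => ε ^ (s' - s)) (nhds 0) (nhds 0) := by
        have hc := Real.continuousAt_rpow_const 0 (s' - s) (Or.inr hpos.le)
        have := hc.tendsto
        rwa [Real.zero_rpow (ne_of_gt hpos)] at this
      have h1 : Tendsto (fun ε : ℝ => ε ^ (s' - s)) l (nhds 0) :=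
        h0.mono_left nhdsWithin_le_nhds
      have h2 : Tendsto (fun ε : ℝ => C * ε ^ (s' - s)) l (nhds 0) := by
        have := h1.const_mul C
        simpa using this
      have h3 := (ENNReal.continuous_ofReal.tendsto 0).comp h2
      simpa [Function.comp_def] using h3
    have hΦle : ∀ᶠ ε in l, Φ s' ε ≤ ENNReal.ofReal (C * ε ^ (s' - s)) := by
      filter_upwards [hmemIoo ε₁ hε₁] with ε hε
      have hεp := hε.1
      have hE' : (0:ℝ) < ε ^ (2 - s') := Real.rpow_pos_of_pos hεp _
      have h1 : Φ s' ε ≤ ENNReal.ofReal (C * ε ^ (2 - s)) / ENNReal.ofReal (ε ^ (2 - s')) :=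
        ENNReal.div_le_div_right (KEY2 ε hε) _
      have h2 : ENNReal.ofReal (C * ε ^ (2 - s)) / ENNReal.ofReal (ε ^ (2 - s'))
          = ENNReal.ofReal (C * ε ^ (s' - s)) := by
        rw [← ENNReal.ofReal_div_of_pos hE', mul_div_assoc, ← Real.rpow_sub hεp]
        ring_nf
      rwa [h2] at h1
    exact tendsto_of_tendsto_of_tendsto_of_le_of_le' tendsto_const_nhds hg
      (Eventually.of_forall fun _ => zero_le) hΦle
  -- for s' ≤ s : liminf Φ s ≤ liminf Φ s'
  have hmono : ∀ s' : ℝ, s' ≤ s → lowerMinkowskiContent G s ≤ lowerMinkowskiContent G s' := by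
    intro s' hs's
    refine liminf_le_liminf ?_
    filter_upwards [hmemIoo 1 one_pos] with ε hε
    have hεp := hε.1
    have hle : ε ^ (2 - s') ≤ ε ^ (2 - s) :=
      Real.rpow_le_rpow_of_exponent_ge hεp hε.2.le (by linarith)
    exact ENNReal.div_le_div_left (ENNReal.ofReal_le_ofReal hle) _
  have hlowup : ∀ s', lowerMinkowskiContent G s' ≤ upperMinkowskiContent G s' := by
    intro s'
    exact liminf_le_limsup
  -- sets
  have hset_low : {t : ℝ | 0 ≤ t ∧ lowerMinkowskiContent G t = 0} = Ioi s := by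
    ext t
    simp only [mem_setOf_eq, mem_Ioi]
    constructor
    · rintro ⟨ht0, htz⟩
      by_contra hc
      push_neg at hc
      have := hmono t hc
      rw [htz] at this
      exact absurd (le_antisymm this (zero_le)) (ne_of_gt hlow_pos)
    · intro hst
      refine ⟨by linarith, ?_⟩
      exact ((htend t hst).liminf_eq)
  have hset_up : {t : ℝ | 0 ≤ t ∧ upperMinkowskiContent G t = 0} = Ioi s := by
    ext t
    simp only [mem_setOf_eq, mem_Ioi]
    constructor
    · rintro ⟨ht0, htz⟩
      by_contra hc
      push_neg at hc
      have h1 : lowerMinkowskiContent G t = 0 :=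
        le_antisymm (htz ▸ hlowup t) (zero_le)
      have := hmono t hc
      rw [h1] at this
      exact absurd (le_antisymm this (zero_le)) (ne_of_gt hlow_pos)
    · intro hst
      refine ⟨by linarith, ?_⟩
      exact ((htend t hst).limsup_eq)
  refine ⟨?_, ?_, hlow_pos, hup_lt⟩
  · rw [lowerBoxDim, hset_low]; exact csInf_Ioi
  · rw [upperBoxDim, hset_up]; exact csInf_Ioi

/-- criterion for fractal oscillation (Theorem 2.1 of [mersat],
cited as Theorem `mersat`): under the stated summation and integral bounds the graph
of `y` has box dimension `s` and is Minkowski nondegenerate. -/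
theorem fractal_oscillation_criterion
    (T s : ℝ) (hT : 0 < T) (hs : s ∈ Set.Ico (1 : ℝ) 2)
    (y : ℝ → ℝ)
    (hy_smooth : ContDiffOn ℝ 1 y (Set.Ioc 0 T))
    (hy_bdd : ∃ B : ℝ, ∀ x ∈ Set.Ioc 0 T, |y x| ≤ B)
    (a : ℕ → ℝ)
    (ha_mem : ∀ n, a n ∈ Set.Ioc 0 T)
    (ha_anti : StrictAnti a)
    (ha_lim : Filter.Tendsto a Filter.atTop (nhds 0))
    (ha_zero : ∀ n, y (a n) = 0)
    (ha_ne : ∀ n, ∀ x ∈ Set.Ioo (a (n + 1)) (a n), y x ≠ 0)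
    (c₁ c₂ ε₀ : ℝ) (hc₁ : 0 < c₁) (hc₂ : 0 < c₂) (hε₀ : 0 < ε₀)
    (k : ℝ → ℕ)
    (hk : ∀ ε ∈ Set.Ioo 0 ε₀, ∀ n ≥ k ε, a n - a (n + 1) ≤ ε)
    (hleft : ∀ ε ∈ Set.Ioo 0 ε₀,
      c₁ * ε ^ (2 - s) ≤ ∑' n : ℕ,
        sSup ((fun x => |y x|) '' Set.Icc (a (n + k ε + 1)) (a (n + k ε))) *
          (a (n + k ε) - a (n + k ε + 1)))
    (hright : ∀ ε ∈ Set.Ioo 0 ε₀,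
      a (k ε) * sSup ((fun x => |y x|) '' Set.Ioc 0 (a (k ε))) +
        ε * ∫ x in (a (k ε))..(a 0), |derivWithin y (Set.Ioc 0 T) x| ≤
          c₂ * ε ^ (2 - s))
    (G : Set (ℝ × ℝ)) (hG : G = {P : ℝ × ℝ | ∃ x ∈ Set.Ioc 0 T, P = (x, y x)}) :
    lowerBoxDim G = s ∧ upperBoxDim G = s ∧
    0 < lowerMinkowskiContent G s ∧ upperMinkowskiContent G s < ⊤ := by
  obtain ⟨hs1, hs2⟩ := hs
  obtain ⟨B, hB⟩ := hy_bdd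
  have hB0 : 0 ≤ B := le_trans (abs_nonneg _) (hB (a 0) (ha_mem 0))
  have hC₀pos : 0 ≤ ∫ x in (a 0)..T, |derivWithin y (Set.Ioc 0 T) x| :=
    intervalIntegral.integral_nonneg (ha_mem 0).2 (fun x _ => abs_nonneg _)
  set C := 5*c₂ + 8*T + 4*B + 3*(∫ x in (a 0)..T, |derivWithin y (Set.Ioc 0 T) x|) + 10 with hC
  have hCpos : 0 < C := by rw [hC]; positivity
  set ε₁ := min ε₀ 1 with hε₁def
  have hε₁pos : 0 < ε₁ := lt_min hε₀ one_pos
  have KEY1 : ∀ ε ∈ Set.Ioo (0:ℝ) ε₁,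
      ENNReal.ofReal (c₁ * ε ^ (2 - s)) ≤ volume (euclNbhd G ε) := by
    intro ε hε
    exact key_lower T s hT y hy_smooth B hB a ha_mem ha_anti ha_zero c₁ ε₀ hc₁ hε₀ k hk hleft G hG ε
      ⟨hε.1, lt_of_lt_of_le hε.2 (min_le_left _ _)⟩
  have KEY2 : ∀ ε ∈ Set.Ioo (0:ℝ) ε₁, volume (euclNbhd G ε) ≤
      ENNReal.ofReal (C * ε ^ (2 - s)) :=
    key_upper T s hT hs1 hs2 y hy_smooth B hB a ha_mem ha_anti ha_zero c₂ ε₀ hc₂ hε₀ k hright G hG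
  exact box_dim_endgame s ⟨hs1, hs2⟩ G c₁ C ε₁ hc₁ hCpos hε₁pos KEY1 KEY2
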